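/- Let x₀ < x₁ and y₀ < y₁ and let Q := [x₀, x₁] × [y₀, y₁]. Suppose u : ℝ² → ℝ is twice continuously differentiable on an open set containing Q with L*[u] = 0 on Q and u(x, y₀) = exp(∫_{x₀}^{x} b(s, y₀) ds) for x ∈ [x₀, x₁], u(x₀, y) = exp(∫_{y₀}^{y} a(x₀, s) ds) for y ∈ [y₀, y₁]; and suppose z : ℝ² → ℝ is twice continuously differentiable on an open set containing Q with L[z] = 0 on Q and z(x, y₁) = exp(−∫_{x₁}^{x} b(s, y₁) ds) for x ∈ [x₀, x₁], z(x₁, y) = exp(−∫_{y₁}^{y} a(x₁, s) ds) for y ∈ [y₀, y₁]. Then z(x₀, y₀) = u(x₁, y₁); that is, the Riemann kernel of the adjoint equation with pole (x₀, y₀), evaluated at (x₁, y₁), equals the Riemann kernel of the original equation with pole (x₁, y₁), evaluated at (x₀, y₀). -/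

import Mathlib

open Set

/-- Partial derivative in the first variable. -/
noncomputable def pdx (f : ℝ × ℝ → ℝ) (p : ℝ × ℝ) : ℝ :=
  deriv (fun x => f (x, p.2)) p.1

/-- Partial derivative in the second variable. -/
noncomputable def pdy (f : ℝ × ℝ → ℝ) (p : ℝ × ℝ) : ℝ :=
  deriv (fun y => f (p.1, y)) p.2

/-- Mixed second partial derivative `∂²f/∂x∂y` (first in `x`, then in `y`). -/
noncomputable def pdxy (f : ℝ × ℝ → ℝ) (p : ℝ × ℝ) : ℝ :=
  pdy (fun q => pdx f q) p

/-- The canonical hyperbolic operator `L[z] = ∂²z/∂x∂y + a ∂z/∂x + b ∂z/∂y + c z`. -/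
noncomputable def Lop (a b c z : ℝ × ℝ → ℝ) (p : ℝ × ℝ) : ℝ :=
  pdxy z p + a p * pdx z p + b p * pdy z p + c p * z p

/-- The adjoint operator `L*[u] = ∂²u/∂x∂y − ∂(au)/∂x − ∂(bu)/∂y + c u`. -/
noncomputable def LstarOp (a b c u : ℝ × ℝ → ℝ) (p : ℝ × ℝ) : ℝ :=
  pdxy u p - pdx (fun q => a q * u q) p - pdy (fun q => b q * u q) p + c p * u p

open MeasureTheory

lemma hasDerivAt_sliceX {f : ℝ × ℝ → ℝ} {φ : ℝ × ℝ →L[ℝ] ℝ} {p : ℝ × ℝ}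
    (h : HasFDerivAt f φ p) : HasDerivAt (fun x => f (x, p.2)) (φ (1, 0)) p.1 := by
  have h1 : HasDerivAt (fun x : ℝ => (x, p.2)) ((1 : ℝ), (0 : ℝ)) p.1 :=
    (hasDerivAt_id p.1).prodMk (hasDerivAt_const p.1 p.2)
  have := h.comp_hasDerivAt (x := p.1) (by simpa using h1)
  exact this

lemma hasDerivAt_sliceY {f : ℝ × ℝ → ℝ} {φ : ℝ × ℝ →L[ℝ] ℝ} {p : ℝ × ℝ}
    (h : HasFDerivAt f φ p) : HasDerivAt (fun y => f (p.1, y)) (φ (0, 1)) p.2 := by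
  have h1 : HasDerivAt (fun y : ℝ => (p.1, y)) ((0 : ℝ), (1 : ℝ)) p.2 :=
    (hasDerivAt_const p.2 p.1).prodMk (hasDerivAt_id p.2)
  have := h.comp_hasDerivAt (x := p.2) (by simpa using h1)
  exact this

lemma pdx_eq {f : ℝ × ℝ → ℝ} {p : ℝ × ℝ} (h : DifferentiableAt ℝ f p) :
    pdx f p = fderiv ℝ f p (1, 0) :=
  (hasDerivAt_sliceX h.hasFDerivAt).deriv

lemma pdy_eq {f : ℝ × ℝ → ℝ} {p : ℝ × ℝ} (h : DifferentiableAt ℝ f p) :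
    pdy f p = fderiv ℝ f p (0, 1) :=
  (hasDerivAt_sliceY h.hasFDerivAt).deriv

lemma pdy_congr {f g : ℝ × ℝ → ℝ} {p : ℝ × ℝ} (h : f =ᶠ[nhds p] g) : pdy f p = pdy g p := by
  apply Filter.EventuallyEq.deriv_eq
  have hc : ContinuousAt (fun y : ℝ => (p.1, y)) p.2 := by fun_prop
  have ht : Filter.Tendsto (fun y : ℝ => (p.1, y)) (nhds p.2) (nhds p) := by
    simpa using hc.tendsto
  exact ht.eventually h

lemma contDiffOn_pdv {f : ℝ × ℝ → ℝ} {O : Set (ℝ × ℝ)} (hO : IsOpen O)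
    (hf : ContDiffOn ℝ 2 f O) (v : ℝ × ℝ) :
    ContDiffOn ℝ 1 (fun q => fderiv ℝ f q v) O :=
  (hf.fderiv_of_isOpen hO (by norm_num : (1 : WithTop ℕ∞) + 1 ≤ 2)).clm_apply contDiffOn_const

lemma diffAt_of_contDiffOn {f : ℝ × ℝ → ℝ} {O : Set (ℝ × ℝ)} {n : WithTop ℕ∞} (hO : IsOpen O)
    (hf : ContDiffOn ℝ n f O) (hn : 1 ≤ n) {p : ℝ × ℝ} (hp : p ∈ O) :
    DifferentiableAt ℝ f p :=
  ((hf.differentiableOn (one_pos.trans_le hn).ne').differentiableAt (hO.mem_nhds hp))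

lemma pdxy_eq {f : ℝ × ℝ → ℝ} {O : Set (ℝ × ℝ)} {p : ℝ × ℝ} (hO : IsOpen O)
    (hf : ContDiffOn ℝ 2 f O) (hp : p ∈ O) :
    pdxy f p = fderiv ℝ (fun q => fderiv ℝ f q (1, 0)) p (0, 1) := by
  have h1 : (fun q => pdx f q) =ᶠ[nhds p] (fun q => fderiv ℝ f q (1, 0)) := by
    filter_upwards [hO.mem_nhds hp] with q hq
    exact pdx_eq (diffAt_of_contDiffOn hO hf (by norm_num) hq)
  rw [pdxy, pdy_congr h1]
  exact pdy_eq (diffAt_of_contDiffOn hO (contDiffOn_pdv hO hf (1, 0)) le_rfl hp)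

lemma sndDeriv_symm {f : ℝ × ℝ → ℝ} {O : Set (ℝ × ℝ)} {p : ℝ × ℝ} (hO : IsOpen O)
    (hf : ContDiffOn ℝ 2 f O) (hp : p ∈ O) :
    fderiv ℝ (fun q => fderiv ℝ f q (0, 1)) p (1, 0)
      = fderiv ℝ (fun q => fderiv ℝ f q (1, 0)) p (0, 1) := by
  have hdf : DifferentiableAt ℝ (fderiv ℝ f) p := by
    have := (hf.fderiv_of_isOpen hO
      (by norm_num : (1 : WithTop ℕ∞) + 1 ≤ 2)).differentiableOn one_ne_zero
    exact this.differentiableAt (hO.mem_nhds hp)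
  have key : ∀ v : ℝ × ℝ, fderiv ℝ (fun q => fderiv ℝ f q v) p
      = (fderiv ℝ (fderiv ℝ f) p).flip v := by
    intro v
    have := fderiv_clm_apply (c := fderiv ℝ f) (u := fun _ => v) hdf (differentiableAt_const v)
    simpa using this
  have hsymm : IsSymmSndFDerivAt ℝ f p :=
    ((hf.contDiffAt (hO.mem_nhds hp)).isSymmSndFDerivAt (by norm_num))
  rw [key, key]
  exact hsymm _ _

lemma div_eq_zero {a b c u z : ℝ × ℝ → ℝ} (ha : ContDiff ℝ 1 a) (hb : ContDiff ℝ 1 b)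
    {O : Set (ℝ × ℝ)} (hO : IsOpen O) (hu2 : ContDiffOn ℝ 2 u O) (hz2 : ContDiffOn ℝ 2 z O)
    {p : ℝ × ℝ} (hp : p ∈ O)
    (hLu : LstarOp a b c u p = 0) (hLz : Lop a b c z p = 0) :
    fderiv ℝ (fun q => u q * fderiv ℝ z q (0, 1) + a q * u q * z q) p (1, 0)
      + fderiv ℝ (fun q => b q * u q * z q - z q * fderiv ℝ u q (1, 0)) p (0, 1) = 0 := by
  have hud : DifferentiableAt ℝ u p := diffAt_of_contDiffOn hO hu2 (by norm_num) hp
  have hzd : DifferentiableAt ℝ z p := diffAt_of_contDiffOn hO hz2 (by norm_num) hp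
  have huxd : DifferentiableAt ℝ (fun q => fderiv ℝ u q (1, 0)) p :=
    diffAt_of_contDiffOn hO (contDiffOn_pdv hO hu2 (1, 0)) le_rfl hp
  have hzyd : DifferentiableAt ℝ (fun q => fderiv ℝ z q (0, 1)) p :=
    diffAt_of_contDiffOn hO (contDiffOn_pdv hO hz2 (0, 1)) le_rfl hp
  have had : DifferentiableAt ℝ a p := ha.differentiable one_ne_zero p
  have hbd : DifferentiableAt ℝ b p := hb.differentiable one_ne_zero p
  set ux := fderiv ℝ u p (1, 0) with hux
  set uy := fderiv ℝ u p (0, 1) with huy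
  set zx := fderiv ℝ z p (1, 0) with hzx
  set zy := fderiv ℝ z p (0, 1) with hzy
  set A1 := fderiv ℝ a p (1, 0) with hA1
  set B2 := fderiv ℝ b p (0, 1) with hB2
  set Uxy := fderiv ℝ (fun q => fderiv ℝ u q (1, 0)) p (0, 1) with hUxy
  set Zyx := fderiv ℝ (fun q => fderiv ℝ z q (0, 1)) p (1, 0) with hZyx
  have hu_x : HasDerivAt (fun x => u (x, p.2)) ux p.1 := hasDerivAt_sliceX hud.hasFDerivAt
  have hz_x : HasDerivAt (fun x => z (x, p.2)) zx p.1 := hasDerivAt_sliceX hzd.hasFDerivAt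
  have ha_x : HasDerivAt (fun x => a (x, p.2)) A1 p.1 := hasDerivAt_sliceX had.hasFDerivAt
  have hzy_x : HasDerivAt (fun x => fderiv ℝ z (x, p.2) (0, 1)) Zyx p.1 :=
    hasDerivAt_sliceX hzyd.hasFDerivAt
  have hu_y : HasDerivAt (fun y => u (p.1, y)) uy p.2 := hasDerivAt_sliceY hud.hasFDerivAt
  have hz_y : HasDerivAt (fun y => z (p.1, y)) zy p.2 := hasDerivAt_sliceY hzd.hasFDerivAt
  have hb_y : HasDerivAt (fun y => b (p.1, y)) B2 p.2 := hasDerivAt_sliceY hbd.hasFDerivAt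
  have hux_y : HasDerivAt (fun y => fderiv ℝ u (p.1, y) (1, 0)) Uxy p.2 :=
    hasDerivAt_sliceY huxd.hasFDerivAt
  have hfd : DifferentiableAt ℝ (fun q => u q * fderiv ℝ z q (0, 1) + a q * u q * z q) p :=
    (hud.mul hzyd).add ((had.mul hud).mul hzd)
  have hgd : DifferentiableAt ℝ (fun q => b q * u q * z q - z q * fderiv ℝ u q (1, 0)) p :=
    ((hbd.mul hud).mul hzd).sub (hzd.mul huxd)
  have hF : HasDerivAt (fun x => u (x, p.2) * fderiv ℝ z (x, p.2) (0, 1)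
        + a (x, p.2) * u (x, p.2) * z (x, p.2))
      (fderiv ℝ (fun q => u q * fderiv ℝ z q (0, 1) + a q * u q * z q) p (1, 0)) p.1 :=
    hasDerivAt_sliceX hfd.hasFDerivAt
  have hF' : HasDerivAt (fun x => u (x, p.2) * fderiv ℝ z (x, p.2) (0, 1)
        + a (x, p.2) * u (x, p.2) * z (x, p.2))
      ((ux * zy + u p * Zyx) + ((A1 * u p + a p * ux) * z p + a p * u p * zx)) p.1 := by
    have h1 := hu_x.mul hzy_x
    have h2 := (ha_x.mul hu_x).mul hz_x
    exact h1.add h2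
  have hG : HasDerivAt (fun y => b (p.1, y) * u (p.1, y) * z (p.1, y)
        - z (p.1, y) * fderiv ℝ u (p.1, y) (1, 0))
      (fderiv ℝ (fun q => b q * u q * z q - z q * fderiv ℝ u q (1, 0)) p (0, 1)) p.2 :=
    hasDerivAt_sliceY hgd.hasFDerivAt
  have hG' : HasDerivAt (fun y => b (p.1, y) * u (p.1, y) * z (p.1, y)
        - z (p.1, y) * fderiv ℝ u (p.1, y) (1, 0))
      (((B2 * u p + b p * uy) * z p + b p * u p * zy) - (zy * ux + z p * Uxy)) p.2 := by
    have h1 := (hb_y.mul hu_y).mul hz_y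
    have h2 := hz_y.mul hux_y
    exact h1.sub h2
  have e1 : fderiv ℝ (fun q => u q * fderiv ℝ z q (0, 1) + a q * u q * z q) p (1, 0)
      = (ux * zy + u p * Zyx) + ((A1 * u p + a p * ux) * z p + a p * u p * zx) :=
    hF.unique hF'
  have e2 : fderiv ℝ (fun q => b q * u q * z q - z q * fderiv ℝ u q (1, 0)) p (0, 1)
      = ((B2 * u p + b p * uy) * z p + b p * u p * zy) - (zy * ux + z p * Uxy) :=
    hG.unique hG'
  have hLz' : Zyx + a p * zx + b p * zy + c p * z p = 0 := by
    have h1 : pdx z p = zx := pdx_eq hzd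
    have h2 : pdy z p = zy := pdy_eq hzd
    have h3 : pdxy z p = Zyx := by
      rw [pdxy_eq hO hz2 hp, hZyx, sndDeriv_symm hO hz2 hp]
    rw [Lop, h1, h2, h3] at hLz
    exact hLz
  have hLu' : Uxy - (a p * ux + u p * A1) - (b p * uy + u p * B2) + c p * u p = 0 := by
    have h3 : pdxy u p = Uxy := pdxy_eq hO hu2 hp
    have h4 : pdx (fun q => a q * u q) p = a p * ux + u p * A1 := by
      rw [pdx_eq (f := fun q => a q * u q) (had.mul hud), fderiv_fun_mul had hud]; simp [hux, hA1]
    have h5 : pdy (fun q => b q * u q) p = b p * uy + u p * B2 := by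
      rw [pdy_eq (f := fun q => b q * u q) (hbd.mul hud), fderiv_fun_mul hbd hud]; simp [huy, hB2]
    rw [LstarOp, h3, h4, h5] at hLu
    exact hLu
  rw [e1, e2]
  linear_combination u p * hLz' - z p * hLu'

lemma hasDerivAt_expInt {φ : ℝ → ℝ} (hφ : Continuous φ) (c t : ℝ) :
    HasDerivAt (fun x => Real.exp (∫ s in c..x, φ s)) (φ t * Real.exp (∫ s in c..t, φ s)) t := by
  have h1 : HasDerivAt (fun x => ∫ s in c..x, φ s) (φ t) t :=
    intervalIntegral.integral_hasDerivAt_right (hφ.intervalIntegrable c t)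
      (hφ.stronglyMeasurableAtFilter volume (nhds t)) hφ.continuousAt
  simpa [mul_comm] using h1.exp

lemma hasDerivAt_expIntNeg {φ : ℝ → ℝ} (hφ : Continuous φ) (c t : ℝ) :
    HasDerivAt (fun x => Real.exp (-∫ s in c..x, φ s))
      (-φ t * Real.exp (-∫ s in c..t, φ s)) t := by
  have h1 : HasDerivAt (fun x => ∫ s in c..x, φ s) (φ t) t :=
    intervalIntegral.integral_hasDerivAt_right (hφ.intervalIntegrable c t)
      (hφ.stronglyMeasurableAtFilter volume (nhds t)) hφ.continuousAt
  simpa [mul_comm] using h1.neg.exp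

/-- **Symmetry of the Riemann kernel**: the Riemann kernel of the adjoint equation
with pole `(x₀, y₀)`, evaluated at `(x₁, y₁)`, equals the Riemann kernel of the
original equation with pole `(x₁, y₁)`, evaluated at `(x₀, y₀)`. -/
theorem riemann_kernel_symmetry
    (a b c : ℝ × ℝ → ℝ) (ha : ContDiff ℝ 1 a) (hb : ContDiff ℝ 1 b) (hc : Continuous c)
    (x₀ x₁ y₀ y₁ : ℝ) (hx : x₀ < x₁) (hy : y₀ < y₁)
    (u z : ℝ × ℝ → ℝ)
    (O₁ : Set (ℝ × ℝ)) (hO₁ : IsOpen O₁) (hQO₁ : Icc x₀ x₁ ×ˢ Icc y₀ y₁ ⊆ O₁)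
    (hu : ContDiffOn ℝ 2 u O₁)
    (hLu : ∀ p ∈ Icc x₀ x₁ ×ˢ Icc y₀ y₁, LstarOp a b c u p = 0)
    (hub : ∀ x ∈ Icc x₀ x₁, u (x, y₀) = Real.exp (∫ s in x₀..x, b (s, y₀)))
    (hua : ∀ y ∈ Icc y₀ y₁, u (x₀, y) = Real.exp (∫ s in y₀..y, a (x₀, s)))
    (O₂ : Set (ℝ × ℝ)) (hO₂ : IsOpen O₂) (hQO₂ : Icc x₀ x₁ ×ˢ Icc y₀ y₁ ⊆ O₂)
    (hzreg : ContDiffOn ℝ 2 z O₂)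
    (hLz : ∀ p ∈ Icc x₀ x₁ ×ˢ Icc y₀ y₁, Lop a b c z p = 0)
    (hzb : ∀ x ∈ Icc x₀ x₁, z (x, y₁) = Real.exp (-∫ s in x₁..x, b (s, y₁)))
    (hza : ∀ y ∈ Icc y₀ y₁, z (x₁, y) = Real.exp (-∫ s in y₁..y, a (x₁, s))) :
    z (x₀, y₀) = u (x₁, y₁) := by
  have hO : IsOpen (O₁ ∩ O₂) := hO₁.inter hO₂
  have hQO : Icc x₀ x₁ ×ˢ Icc y₀ y₁ ⊆ O₁ ∩ O₂ := subset_inter hQO₁ hQO₂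
  have hu2 : ContDiffOn ℝ 2 u (O₁ ∩ O₂) := hu.mono inter_subset_left
  have hz2 : ContDiffOn ℝ 2 z (O₁ ∩ O₂) := hzreg.mono inter_subset_right
  set f : ℝ × ℝ → ℝ := fun q => u q * fderiv ℝ z q (0, 1) + a q * u q * z q with hfdef
  set g : ℝ × ℝ → ℝ := fun q => b q * u q * z q - z q * fderiv ℝ u q (1, 0) with hgdef
  have hIccO : Icc ((x₀ : ℝ), (y₀ : ℝ)) (x₁, y₁) ⊆ O₁ ∩ O₂ := by
    rw [Icc_prod_eq]; exact hQO
  have hIooQ : Ioo x₀ x₁ ×ˢ Ioo y₀ y₁ ⊆ Icc x₀ x₁ ×ˢ Icc y₀ y₁ :=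
    prod_mono Ioo_subset_Icc_self Ioo_subset_Icc_self
  -- continuity of f and g on O
  have hcu : ContinuousOn u (O₁ ∩ O₂) := hu2.continuousOn
  have hcz : ContinuousOn z (O₁ ∩ O₂) := hz2.continuousOn
  have hczy : ContinuousOn (fun q => fderiv ℝ z q (0, 1)) (O₁ ∩ O₂) :=
    (contDiffOn_pdv hO hz2 (0, 1)).continuousOn
  have hcux : ContinuousOn (fun q => fderiv ℝ u q (1, 0)) (O₁ ∩ O₂) :=
    (contDiffOn_pdv hO hu2 (1, 0)).continuousOn
  have hcf : ContinuousOn f (O₁ ∩ O₂) :=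
    (hcu.mul hczy).add ((ha.continuous.continuousOn.mul hcu).mul hcz)
  have hcg : ContinuousOn g (O₁ ∩ O₂) :=
    ((hb.continuous.continuousOn.mul hcu).mul hcz).sub (hcz.mul hcux)
  -- differentiability
  have hfdiff : ∀ q ∈ O₁ ∩ O₂, DifferentiableAt ℝ f q := by
    intro q hq
    exact ((diffAt_of_contDiffOn hO hu2 (by norm_num) hq).mul
        (diffAt_of_contDiffOn hO (contDiffOn_pdv hO hz2 (0, 1)) le_rfl hq)).add
      (((ha.differentiable one_ne_zero q).mul
          (diffAt_of_contDiffOn hO hu2 (by norm_num) hq)).mul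
        (diffAt_of_contDiffOn hO hz2 (by norm_num) hq))
  have hgdiff : ∀ q ∈ O₁ ∩ O₂, DifferentiableAt ℝ g q := by
    intro q hq
    exact (((hb.differentiable one_ne_zero q).mul
          (diffAt_of_contDiffOn hO hu2 (by norm_num) hq)).mul
        (diffAt_of_contDiffOn hO hz2 (by norm_num) hq)).sub
      ((diffAt_of_contDiffOn hO hz2 (by norm_num) hq).mul
        (diffAt_of_contDiffOn hO (contDiffOn_pdv hO hu2 (1, 0)) le_rfl hq))
  -- the divergence vanishes on the open rectangle
  have hzero : ∀ q ∈ Ioo x₀ x₁ ×ˢ Ioo y₀ y₁,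
      fderiv ℝ f q (1, 0) + fderiv ℝ g q (0, 1) = 0 := fun q hq =>
    div_eq_zero ha hb hO hu2 hz2 (hQO (hIooQ hq)) (hLu q (hIooQ hq)) (hLz q (hIooQ hq))
  -- null boundary
  have hnull : volume ((Icc x₀ x₁ ×ˢ Icc y₀ y₁) \ (Ioo x₀ x₁ ×ˢ Ioo y₀ y₁)) = 0 := by
    have hsub : (Icc x₀ x₁ ×ˢ Icc y₀ y₁) \ (Ioo x₀ x₁ ×ˢ Ioo y₀ y₁) ⊆
        ((Icc x₀ x₁ \ Ioo x₀ x₁) ×ˢ Icc y₀ y₁) ∪ (Icc x₀ x₁ ×ˢ (Icc y₀ y₁ \ Ioo y₀ y₁)) := by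
      rintro ⟨s, t⟩ ⟨⟨hs, ht⟩, hn⟩
      by_cases h : s ∈ Ioo x₀ x₁
      · exact Or.inr ⟨hs, ht, fun h2 => hn ⟨h, h2⟩⟩
      · exact Or.inl ⟨⟨hs, h⟩, ht⟩
    refine measure_mono_null hsub (measure_union_null ?_ ?_)
    · rw [Measure.volume_eq_prod, Measure.prod_prod]
      have h1 : volume (Icc x₀ x₁ \ Ioo x₀ x₁) = 0 := by
        rw [Icc_diff_Ioo_same hx.le]
        exact (Set.Finite.insert x₀ (finite_singleton x₁)).measure_zero volume
      rw [h1, zero_mul]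
    · rw [Measure.volume_eq_prod, Measure.prod_prod]
      have h1 : volume (Icc y₀ y₁ \ Ioo y₀ y₁) = 0 := by
        rw [Icc_diff_Ioo_same hy.le]
        exact (Set.Finite.insert y₀ (finite_singleton y₁)).measure_zero volume
      rw [h1, mul_zero]
  have hae : (fun q => fderiv ℝ f q (1, 0) + fderiv ℝ g q (0, 1))
      =ᵐ[volume.restrict (Icc ((x₀ : ℝ), (y₀ : ℝ)) (x₁, y₁))] (fun _ => 0) := by
    have h0 : ∀ᵐ q ∂volume,
        q ∉ (Icc x₀ x₁ ×ˢ Icc y₀ y₁) \ (Ioo x₀ x₁ ×ˢ Ioo y₀ y₁) :=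
      measure_eq_zero_iff_ae_notMem.mp hnull
    have h1 : ∀ᵐ q ∂(volume.restrict (Icc ((x₀ : ℝ), (y₀ : ℝ)) (x₁, y₁))),
        q ∉ (Icc x₀ x₁ ×ˢ Icc y₀ y₁) \ (Ioo x₀ x₁ ×ˢ Ioo y₀ y₁) := ae_restrict_of_ae h0
    have h2 : ∀ᵐ q ∂(volume.restrict (Icc ((x₀ : ℝ), (y₀ : ℝ)) (x₁, y₁))),
        q ∈ Icc ((x₀ : ℝ), (y₀ : ℝ)) (x₁, y₁) := ae_restrict_mem measurableSet_Icc
    filter_upwards [h1, h2] with q hq1 hq2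
    have hq3 : q ∈ Icc x₀ x₁ ×ˢ Icc y₀ y₁ := by rwa [Icc_prod_eq] at hq2
    have hq4 : q ∈ Ioo x₀ x₁ ×ˢ Ioo y₀ y₁ := by
      by_contra hcon
      exact hq1 ⟨hq3, hcon⟩
    exact hzero q hq4
  have Hi : IntegrableOn (fun q => fderiv ℝ f q (1, 0) + fderiv ℝ g q (0, 1))
      (Icc ((x₀ : ℝ), (y₀ : ℝ)) (x₁, y₁)) volume :=
    (integrable_zero _ _ _).congr hae.symm
  -- divergence theorem
  have hdiv : (∫ q in Icc ((x₀ : ℝ), (y₀ : ℝ)) (x₁, y₁),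
        fderiv ℝ f q (1, 0) + fderiv ℝ g q (0, 1)) =
      (((∫ x in x₀..x₁, g (x, y₁)) - ∫ x in x₀..x₁, g (x, y₀)) +
          ∫ y in y₀..y₁, f (x₁, y)) - ∫ y in y₀..y₁, f (x₀, y) := by
    exact integral_divergence_prod_Icc_of_hasFDerivAt_off_countable_of_le f g
      (fun q => fderiv ℝ f q) (fun q => fderiv ℝ g q) (x₀, y₀) (x₁, y₁)
      ⟨hx.le, hy.le⟩ ∅ countable_empty
      (hcf.mono hIccO) (hcg.mono hIccO)
      (fun q hq => (hfdiff q (hQO (hIooQ (diff_subset hq)))).hasFDerivAt)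
      (fun q hq => (hgdiff q (hQO (hIooQ (diff_subset hq)))).hasFDerivAt)
      Hi
  have hLHS : (∫ q in Icc ((x₀ : ℝ), (y₀ : ℝ)) (x₁, y₁),
      fderiv ℝ f q (1, 0) + fderiv ℝ g q (0, 1)) = 0 := by
    rw [integral_congr_ae hae]; simp
  -- boundary: x slice at y₀ vanishes
  have hbnd_g0 : (∫ x in x₀..x₁, g (x, y₀)) = 0 := by
    rw [intervalIntegral.integral_of_le hx.le,
      setIntegral_congr_set (Ioo_ae_eq_Ioc (a := x₀) (b := x₁)).symm]
    apply setIntegral_eq_zero_of_forall_eq_zero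
    intro x hxm
    have hpQ : ((x : ℝ), y₀) ∈ Icc x₀ x₁ ×ˢ Icc y₀ y₁ :=
      ⟨Ioo_subset_Icc_self hxm, left_mem_Icc.mpr hy.le⟩
    have hud : DifferentiableAt ℝ u (x, y₀) :=
      diffAt_of_contDiffOn hO hu2 (by norm_num) (hQO hpQ)
    have hev : (fun t => u (t, y₀)) =ᶠ[nhds x]
        (fun t => Real.exp (∫ s in x₀..t, b (s, y₀))) := by
      filter_upwards [Ioo_mem_nhds hxm.1 hxm.2] with t ht
      exact hub t (Ioo_subset_Icc_self ht)
    have hder1 : HasDerivAt (fun t => u (t, y₀))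
        (b (x, y₀) * Real.exp (∫ s in x₀..x, b (s, y₀))) x :=
      (hasDerivAt_expInt (hb.continuous.comp (by fun_prop)) x₀ x).congr_of_eventuallyEq hev
    have hder2 : HasDerivAt (fun t => u (t, y₀)) (fderiv ℝ u (x, y₀) (1, 0)) x :=
      hasDerivAt_sliceX hud.hasFDerivAt
    have hux : fderiv ℝ u (x, y₀) (1, 0) = b (x, y₀) * u (x, y₀) := by
      rw [hder2.unique hder1, hub x (Ioo_subset_Icc_self hxm)]
    show b (x, y₀) * u (x, y₀) * z (x, y₀) - z (x, y₀) * fderiv ℝ u (x, y₀) (1, 0) = 0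
    rw [hux]; ring
  -- boundary: y slice at x₁ vanishes
  have hbnd_f1 : (∫ y in y₀..y₁, f (x₁, y)) = 0 := by
    rw [intervalIntegral.integral_of_le hy.le,
      setIntegral_congr_set (Ioo_ae_eq_Ioc (a := y₀) (b := y₁)).symm]
    apply setIntegral_eq_zero_of_forall_eq_zero
    intro y hym
    have hpQ : ((x₁ : ℝ), y) ∈ Icc x₀ x₁ ×ˢ Icc y₀ y₁ :=
      ⟨right_mem_Icc.mpr hx.le, Ioo_subset_Icc_self hym⟩
    have hzd : DifferentiableAt ℝ z (x₁, y) :=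
      diffAt_of_contDiffOn hO hz2 (by norm_num) (hQO hpQ)
    have hev : (fun t => z (x₁, t)) =ᶠ[nhds y]
        (fun t => Real.exp (-∫ s in y₁..t, a (x₁, s))) := by
      filter_upwards [Ioo_mem_nhds hym.1 hym.2] with t ht
      exact hza t (Ioo_subset_Icc_self ht)
    have hder1 : HasDerivAt (fun t => z (x₁, t))
        (-a (x₁, y) * Real.exp (-∫ s in y₁..y, a (x₁, s))) y :=
      (hasDerivAt_expIntNeg (ha.continuous.comp (by fun_prop)) y₁ y).congr_of_eventuallyEq hev
    have hder2 : HasDerivAt (fun t => z (x₁, t)) (fderiv ℝ z (x₁, y) (0, 1)) y :=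
      hasDerivAt_sliceY hzd.hasFDerivAt
    have hzy : fderiv ℝ z (x₁, y) (0, 1) = -a (x₁, y) * z (x₁, y) := by
      rw [hder2.unique hder1, hza y (Ioo_subset_Icc_self hym)]
    show u (x₁, y) * fderiv ℝ z (x₁, y) (0, 1) + a (x₁, y) * u (x₁, y) * z (x₁, y) = 0
    rw [hzy]; ring
  -- boundary: y slice at x₀, FTC
  have hbnd_f0 : (∫ y in y₀..y₁, f (x₀, y))
      = u (x₀, y₁) * z (x₀, y₁) - u (x₀, y₀) * z (x₀, y₀) := by
    have hmap : ∀ y ∈ Icc y₀ y₁, ((x₀ : ℝ), y) ∈ O₁ ∩ O₂ := fun y hym =>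
      hQO ⟨left_mem_Icc.mpr hx.le, hym⟩
    have hmapc : Continuous (fun y : ℝ => ((x₀ : ℝ), y)) := by fun_prop
    apply intervalIntegral.integral_eq_sub_of_hasDeriv_right_of_le hy.le
    · exact ((hcu.comp hmapc.continuousOn hmap).mul (hcz.comp hmapc.continuousOn hmap))
    · intro y hym
      have hp : ((x₀ : ℝ), y) ∈ O₁ ∩ O₂ := hmap y (Ioo_subset_Icc_self hym)
      have hud : DifferentiableAt ℝ u (x₀, y) := diffAt_of_contDiffOn hO hu2 (by norm_num) hp
      have hzd : DifferentiableAt ℝ z (x₀, y) := diffAt_of_contDiffOn hO hz2 (by norm_num) hp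
      have hU : HasDerivAt (fun t => u (x₀, t)) (fderiv ℝ u (x₀, y) (0, 1)) y :=
        hasDerivAt_sliceY hud.hasFDerivAt
      have hZ : HasDerivAt (fun t => z (x₀, t)) (fderiv ℝ z (x₀, y) (0, 1)) y :=
        hasDerivAt_sliceY hzd.hasFDerivAt
      have hev : (fun t => u (x₀, t)) =ᶠ[nhds y]
          (fun t => Real.exp (∫ s in y₀..t, a (x₀, s))) := by
        filter_upwards [Ioo_mem_nhds hym.1 hym.2] with t ht
        exact hua t (Ioo_subset_Icc_self ht)
      have hder1 : HasDerivAt (fun t => u (x₀, t))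
          (a (x₀, y) * Real.exp (∫ s in y₀..y, a (x₀, s))) y :=
        (hasDerivAt_expInt (ha.continuous.comp (by fun_prop)) y₀ y).congr_of_eventuallyEq hev
      have huy : fderiv ℝ u (x₀, y) (0, 1) = a (x₀, y) * u (x₀, y) := by
        rw [hU.unique hder1, hua y (Ioo_subset_Icc_self hym)]
      have : f (x₀, y) = fderiv ℝ u (x₀, y) (0, 1) * z (x₀, y)
          + u (x₀, y) * fderiv ℝ z (x₀, y) (0, 1) := by
        show u (x₀, y) * fderiv ℝ z (x₀, y) (0, 1) + a (x₀, y) * u (x₀, y) * z (x₀, y) = _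
        rw [huy]; ring
      rw [this]
      exact (hU.mul hZ).hasDerivWithinAt
    · apply ContinuousOn.intervalIntegrable
      rw [uIcc_of_le hy.le]
      exact hcf.comp hmapc.continuousOn hmap
  -- boundary: x slice at y₁, FTC
  have hbnd_g1 : (∫ x in x₀..x₁, g (x, y₁))
      = u (x₀, y₁) * z (x₀, y₁) - u (x₁, y₁) * z (x₁, y₁) := by
    have hmap : ∀ x ∈ Icc x₀ x₁, ((x : ℝ), y₁) ∈ O₁ ∩ O₂ := fun x hxm =>
      hQO ⟨hxm, right_mem_Icc.mpr hy.le⟩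
    have hmapc : Continuous (fun x : ℝ => ((x : ℝ), y₁)) := by fun_prop
    have key : (∫ x in x₀..x₁, -g (x, y₁))
        = u (x₁, y₁) * z (x₁, y₁) - u (x₀, y₁) * z (x₀, y₁) := by
      apply intervalIntegral.integral_eq_sub_of_hasDeriv_right_of_le hx.le
      · exact ((hcu.comp hmapc.continuousOn hmap).mul (hcz.comp hmapc.continuousOn hmap))
      · intro x hxm
        have hp : ((x : ℝ), y₁) ∈ O₁ ∩ O₂ := hmap x (Ioo_subset_Icc_self hxm)
        have hud : DifferentiableAt ℝ u (x, y₁) := diffAt_of_contDiffOn hO hu2 (by norm_num) hp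
        have hzd : DifferentiableAt ℝ z (x, y₁) := diffAt_of_contDiffOn hO hz2 (by norm_num) hp
        have hU : HasDerivAt (fun t => u (t, y₁)) (fderiv ℝ u (x, y₁) (1, 0)) x :=
          hasDerivAt_sliceX hud.hasFDerivAt
        have hZ : HasDerivAt (fun t => z (t, y₁)) (fderiv ℝ z (x, y₁) (1, 0)) x :=
          hasDerivAt_sliceX hzd.hasFDerivAt
        have hev : (fun t => z (t, y₁)) =ᶠ[nhds x]
            (fun t => Real.exp (-∫ s in x₁..t, b (s, y₁))) := by
          filter_upwards [Ioo_mem_nhds hxm.1 hxm.2] with t ht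
          exact hzb t (Ioo_subset_Icc_self ht)
        have hder1 : HasDerivAt (fun t => z (t, y₁))
            (-b (x, y₁) * Real.exp (-∫ s in x₁..x, b (s, y₁))) x :=
          (hasDerivAt_expIntNeg (hb.continuous.comp (by fun_prop)) x₁ x).congr_of_eventuallyEq hev
        have hzx : fderiv ℝ z (x, y₁) (1, 0) = -b (x, y₁) * z (x, y₁) := by
          rw [hZ.unique hder1, hzb x (Ioo_subset_Icc_self hxm)]
        have : -g (x, y₁) = fderiv ℝ u (x, y₁) (1, 0) * z (x, y₁)
            + u (x, y₁) * fderiv ℝ z (x, y₁) (1, 0) := by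
          show -(b (x, y₁) * u (x, y₁) * z (x, y₁) - z (x, y₁) * fderiv ℝ u (x, y₁) (1, 0)) = _
          rw [hzx]; ring
        rw [this]
        exact (hU.mul hZ).hasDerivWithinAt
      · apply ContinuousOn.intervalIntegrable
        rw [uIcc_of_le hx.le]
        exact (hcg.comp hmapc.continuousOn hmap).neg
    rw [intervalIntegral.integral_neg] at key
    linarith
  -- endpoint values
  have hu00 : u (x₀, y₀) = 1 := by
    rw [hub x₀ (left_mem_Icc.mpr hx.le), intervalIntegral.integral_same, Real.exp_zero]
  have hz11 : z (x₁, y₁) = 1 := by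
    rw [hza y₁ (right_mem_Icc.mpr hy.le), intervalIntegral.integral_same, neg_zero,
      Real.exp_zero]
  rw [hLHS, hbnd_g0, hbnd_f1, hbnd_f0, hbnd_g1] at hdiv
  rw [hu00, hz11] at hdiv
  linarith
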